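/- Let L : [0,∞) → (0,∞) be measurable, and suppose there exist r₀ ≥ 0 and ζ > 0 such that L is differentiable and nonincreasing on [r₀, ∞), L(x) → 0 as x → ∞, and x·L(x) ≥ ζ·(−L′(x)) for all x ≥ r₀. Suppose moreover there is λ_c ≥ 0 such that ∫_{r₀}^∞ (r / L(r)²)·e^{−πλ r²} dr < ∞ for all λ > λ_c. Then for every λ > max(λ_c, 1/(πζ)), the double integral ∫_0^∞ ∫_0^∞ 2πλ·r·t·exp( −πλr² − 2πλ·t·∫_{r}^∞ x·L(x)/(1+t·L(x)) dx ) dr dt is finite. -/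

import Mathlib

open MeasureTheory Set Filter
open scoped ENNReal

/-- The exponential `x ↦ e^{-x}` extended to `[0,∞]`, with `e^{-∞} = 0`. -/
noncomputable def expNeg (x : ENNReal) : ENNReal :=
  if x = ⊤ then 0 else ENNReal.ofReal (Real.exp (-x.toReal))

lemma expNeg_ofReal {a : ℝ} (ha : 0 ≤ a) :
    expNeg (ENNReal.ofReal a) = ENNReal.ofReal (Real.exp (-a)) := by
  rw [expNeg, if_neg ENNReal.ofReal_ne_top, ENNReal.toReal_ofReal ha]

lemma expNeg_anti {a b : ENNReal} (h : a ≤ b) : expNeg b ≤ expNeg a := by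
  unfold expNeg
  rcases eq_or_ne b ⊤ with hb | hb
  · simp [hb]
  · have ha : a ≠ ⊤ := fun h' => hb (top_le_iff.1 (h' ▸ h))
    rw [if_neg hb, if_neg ha]
    exact ENNReal.ofReal_le_ofReal (Real.exp_le_exp.2 (neg_le_neg
      (ENNReal.toReal_mono hb h)))

lemma expNeg_add (a b : ENNReal) : expNeg (a + b) = expNeg a * expNeg b := by
  unfold expNeg
  rcases eq_or_ne a ⊤ with ha | ha
  · simp [ha]
  rcases eq_or_ne b ⊤ with hb | hb
  · simp [hb, ha]
  · rw [if_neg ha, if_neg hb, if_neg (by simp [ha, hb]), ENNReal.toReal_add ha hb,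
      neg_add, Real.exp_add, ENNReal.ofReal_mul (Real.exp_nonneg _)]


lemma deriv_nonpos_of_antitone {r₀ : ℝ} {L L' : ℝ → ℝ}
    (hLderiv : ∀ x, r₀ ≤ x → HasDerivAt L (L' x) x)
    (hLmono : ∀ x y, r₀ ≤ x → x ≤ y → L y ≤ L x)
    {x : ℝ} (hx : r₀ ≤ x) : L' x ≤ 0 := by
  have h := hasDerivAt_iff_tendsto_slope.1 (hLderiv x hx)
  have h2 : Tendsto (slope L x) (nhdsWithin x (Ioi x)) (nhds (L' x)) :=
    h.mono_left (nhdsWithin_mono x (fun y hy => ne_of_gt hy))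
  refine le_of_tendsto h2 ?_
  filter_upwards [self_mem_nhdsWithin] with y hy
  rw [slope_def_field]
  apply div_nonpos_of_nonpos_of_nonneg
  · have := hLmono x y hx (le_of_lt hy)
    linarith
  · have : x < y := hy
    linarith

lemma aux_J (r₀ ζ : ℝ) (hr₀ : 0 ≤ r₀) (hζ : 0 < ζ) (L L' : ℝ → ℝ)
    (hLpos : ∀ x, 0 ≤ x → 0 < L x)
    (hLderiv : ∀ x, r₀ ≤ x → HasDerivAt L (L' x) x)
    (hLmono : ∀ x y, r₀ ≤ x → x ≤ y → L y ≤ L x)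
    (hLlim : Filter.Tendsto L Filter.atTop (nhds 0))
    (hreg : ∀ x, r₀ ≤ x → ζ * (-(L' x)) ≤ x * L x)
    (hLmeas : Measurable L)
    {t m : ℝ} (ht : 0 < t) (hm : r₀ ≤ m) :
    ENNReal.ofReal (ζ / t * Real.log (1 + t * L m)) ≤
      ∫⁻ x in Set.Ioi m, ENNReal.ofReal (x * L x / (1 + t * L x)) := by
  have hm0 : 0 ≤ m := le_trans hr₀ hm
  set g : ℝ → ℝ := fun x => -(ζ / t) * Real.log (1 + t * L x) with hg
  set g' : ℝ → ℝ := fun x => ζ * (-(L' x)) / (1 + t * L x) with hg'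
  have hpos : ∀ x, 0 ≤ x → 0 < 1 + t * L x := by
    intro x hx
    have := hLpos x hx
    nlinarith
  have hderiv : ∀ x ∈ Ioi m, HasDerivAt g (g' x) x := by
    intro x hx
    have hx0 : r₀ ≤ x := le_trans hm (le_of_lt hx)
    have h1 : HasDerivAt (fun y => 1 + t * L y) (t * L' x) x :=
      ((hLderiv x hx0).const_mul t).const_add 1
    have h2 := (h1.log (ne_of_gt (hpos x (le_trans hm0 (le_of_lt hx)))))
    have h3 := h2.const_mul (-(ζ / t))
    refine h3.congr_deriv ?_
    have hne : (1 : ℝ) + t * L x ≠ 0 := ne_of_gt (hpos x (le_trans hm0 (le_of_lt hx)))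
    show _ = ζ * (-(L' x)) / (1 + t * L x)
    field_simp
  have hg'nonneg : ∀ x ∈ Ioi m, 0 ≤ g' x := by
    intro x hx
    have hx0 : r₀ ≤ x := le_trans hm (le_of_lt hx)
    have hL' := deriv_nonpos_of_antitone hLderiv hLmono hx0
    exact div_nonneg (by nlinarith) (le_of_lt (hpos x (le_trans hm0 (le_of_lt hx))))
  have hcont : ContinuousWithinAt g (Ici m) m := by
    have hLc : ContinuousAt L m := (hLderiv m hm).continuousAt
    have h1 : ContinuousAt (fun y => 1 + t * L y) m := by fun_prop
    have h2 : ContinuousAt (fun y => Real.log (1 + t * L y)) m :=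
      h1.log (ne_of_gt (hpos m hm0))
    exact ((continuousAt_const.mul h2).continuousWithinAt)
  have htend : Tendsto g atTop (nhds 0) := by
    have h1 : Tendsto (fun x => 1 + t * L x) atTop (nhds 1) := by
      have := (hLlim.const_mul t).const_add 1
      simpa using this
    have h2 : Tendsto (fun x => Real.log (1 + t * L x)) atTop (nhds 0) := by
      have := (Real.continuousAt_log one_ne_zero).tendsto.comp h1
      simpa [Real.log_one, Function.comp_def] using this
    have := h2.const_mul (-(ζ / t))
    simpa [hg, neg_mul] using this
  have hint : ∫ x in Ioi m, g' x = 0 - g m :=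
    integral_Ioi_of_hasDerivAt_of_nonneg hcont hderiv hg'nonneg htend
  have hintegrable : IntegrableOn g' (Ioi m) :=
    integrableOn_Ioi_deriv_of_nonneg hcont hderiv hg'nonneg htend
  have hval : ∫ x in Ioi m, g' x = ζ / t * Real.log (1 + t * L m) := by
    rw [hint]; simp [hg]
  calc ENNReal.ofReal (ζ / t * Real.log (1 + t * L m))
      = ENNReal.ofReal (∫ x in Ioi m, g' x) := by rw [hval]
    _ = ∫⁻ x in Ioi m, ENNReal.ofReal (g' x) := by
        apply ofReal_integral_eq_lintegral_ofReal hintegrable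
        exact (ae_restrict_iff' measurableSet_Ioi).2 (ae_of_all _ hg'nonneg)
    _ ≤ ∫⁻ x in Set.Ioi m, ENNReal.ofReal (x * L x / (1 + t * L x)) := by
        apply setLIntegral_mono
        · exact ((measurable_id.mul hLmeas).div
            ((hLmeas.const_mul t).const_add 1)).ennreal_ofReal
        · intro x hx
          apply ENNReal.ofReal_le_ofReal
          have hx0 : 0 ≤ x := le_trans hm0 (le_of_lt hx)
          have := hreg x (le_trans hm (le_of_lt hx))
          exact div_le_div_of_nonneg_right this (hpos x hx0).le


lemma aux_T {c β : ℝ} (hc : 0 < c) (hβ : 2 < β) :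
    ∫⁻ t in Set.Ioi (0 : ℝ),
        ENNReal.ofReal t * ENNReal.ofReal ((1 + t * c) ^ (-β)) ≤
      ENNReal.ofReal ((1 + 1 / (β - 2)) / c ^ 2) := by
  have ha : (0 : ℝ) < c⁻¹ := inv_pos.2 hc
  rw [← Set.Ioc_union_Ioi_eq_Ioi ha.le,
    lintegral_union measurableSet_Ioi (Set.Ioc_disjoint_Ioi le_rfl)]
  have h1β : 1 - β < -1 := by linarith
  -- part 1 : over Ioc 0 c⁻¹
  have part1 : ∫⁻ t in Set.Ioc (0 : ℝ) c⁻¹,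
      ENNReal.ofReal t * ENNReal.ofReal ((1 + t * c) ^ (-β)) ≤
      ENNReal.ofReal (c⁻¹ * c⁻¹) := by
    calc ∫⁻ t in Set.Ioc (0 : ℝ) c⁻¹,
        ENNReal.ofReal t * ENNReal.ofReal ((1 + t * c) ^ (-β))
        ≤ ∫⁻ _ in Set.Ioc (0 : ℝ) c⁻¹, ENNReal.ofReal c⁻¹ := by
          apply setLIntegral_mono measurable_const
          intro t ht
          calc ENNReal.ofReal t * ENNReal.ofReal ((1 + t * c) ^ (-β))
              ≤ ENNReal.ofReal c⁻¹ * 1 := by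
                apply mul_le_mul'
                · exact ENNReal.ofReal_le_ofReal ht.2
                · apply ENNReal.ofReal_le_one.2
                  apply Real.rpow_le_one_of_one_le_of_nonpos
                  · nlinarith [ht.1, hc]
                  · linarith
            _ = ENNReal.ofReal c⁻¹ := mul_one _
      _ = ENNReal.ofReal c⁻¹ * volume (Set.Ioc (0 : ℝ) c⁻¹) := setLIntegral_const _ _
      _ = ENNReal.ofReal c⁻¹ * ENNReal.ofReal c⁻¹ := by
          rw [Real.volume_Ioc, sub_zero]
      _ = ENNReal.ofReal (c⁻¹ * c⁻¹) := (ENNReal.ofReal_mul ha.le).symm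
  -- part 2 : over Ioi c⁻¹
  have hmeas2 : Measurable fun t : ℝ => ENNReal.ofReal (c ^ (-β) * t ^ (1 - β)) :=
    (measurable_const.mul (measurable_id.pow measurable_const)).ennreal_ofReal
  have part2 : ∫⁻ t in Set.Ioi c⁻¹,
      ENNReal.ofReal t * ENNReal.ofReal ((1 + t * c) ^ (-β)) ≤
      ENNReal.ofReal (c ^ (-β) * (c ^ (β - 2) / (β - 2))) := by
    calc ∫⁻ t in Set.Ioi c⁻¹,
        ENNReal.ofReal t * ENNReal.ofReal ((1 + t * c) ^ (-β))
        ≤ ∫⁻ t in Set.Ioi c⁻¹, ENNReal.ofReal (c ^ (-β) * t ^ (1 - β)) := by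
          apply setLIntegral_mono hmeas2
          intro t ht
          have ht0 : 0 < t := lt_trans ha ht
          rw [← ENNReal.ofReal_mul ht0.le]
          apply ENNReal.ofReal_le_ofReal
          have h1 : (1 + t * c) ^ (-β) ≤ (t * c) ^ (-β) :=
            Real.rpow_le_rpow_of_nonpos (by positivity) (by linarith) (by linarith)
          have h2 : (t * c) ^ (-β) = t ^ (-β) * c ^ (-β) :=
            Real.mul_rpow ht0.le hc.le
          have h3 : t * t ^ (-β) = t ^ (1 - β) := by
            rw [show (1 - β) = 1 + -β by ring, Real.rpow_add ht0, Real.rpow_one]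
          calc t * (1 + t * c) ^ (-β) ≤ t * (t * c) ^ (-β) := by
                apply mul_le_mul_of_nonneg_left h1 ht0.le
            _ = t * t ^ (-β) * c ^ (-β) := by rw [h2]; ring
            _ = c ^ (-β) * t ^ (1 - β) := by rw [h3]; ring
      _ = ∫⁻ t in Set.Ioi c⁻¹,
            ENNReal.ofReal (c ^ (-β)) * ENNReal.ofReal (t ^ (1 - β)) := by
          apply lintegral_congr
          intro t
          rw [← ENNReal.ofReal_mul (Real.rpow_nonneg hc.le _)]
      _ = ENNReal.ofReal (c ^ (-β)) * ∫⁻ t in Set.Ioi c⁻¹,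
            ENNReal.ofReal (t ^ (1 - β)) :=
          lintegral_const_mul _ ((measurable_id'.pow measurable_const).ennreal_ofReal)
      _ = ENNReal.ofReal (c ^ (-β)) * ENNReal.ofReal (c ^ (β - 2) / (β - 2)) := by
          congr 1
          rw [← ofReal_integral_eq_lintegral_ofReal
            (integrableOn_Ioi_rpow_of_lt h1β ha)
            ((ae_restrict_iff' measurableSet_Ioi).2 (ae_of_all _ fun t ht =>
              Real.rpow_nonneg (lt_trans ha ht).le _))]
          congr 1
          rw [integral_Ioi_rpow_of_lt h1β ha]
          have h5 : c⁻¹ ^ (1 - β + 1) = c ^ (β - 2) := by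
            rw [Real.inv_rpow hc.le, ← Real.rpow_neg hc.le]
            congr 1
            ring
          rw [h5, show (1 - β + 1 : ℝ) = -(β - 2) by ring, neg_div_neg_eq]
      _ = ENNReal.ofReal (c ^ (-β) * (c ^ (β - 2) / (β - 2))) := by
          rw [← ENNReal.ofReal_mul (Real.rpow_nonneg hc.le _)]
  calc _ ≤ ENNReal.ofReal (c⁻¹ * c⁻¹) +
        ENNReal.ofReal (c ^ (-β) * (c ^ (β - 2) / (β - 2))) := add_le_add part1 part2
    _ = ENNReal.ofReal ((1 + 1 / (β - 2)) / c ^ 2) := by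
        have hβ2 : (0:ℝ) < β - 2 := by linarith
        rw [← ENNReal.ofReal_add (by positivity)
          (mul_nonneg (Real.rpow_nonneg hc.le _)
            (div_nonneg (Real.rpow_nonneg hc.le _) hβ2.le))]
        congr 1
        have h4 : c ^ (-β) * c ^ (β - 2) = (c ^ 2)⁻¹ := by
          rw [← Real.rpow_add hc, show -β + (β - 2) = -(2:ℝ) by ring,
            Real.rpow_neg hc.le, show ((2:ℝ):ℝ) = ((2:ℕ):ℝ) by norm_num,
            Real.rpow_natCast]
        rw [show c ^ (-β) * (c ^ (β - 2) / (β - 2)) =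
          (c ^ (-β) * c ^ (β - 2)) / (β - 2) by ring, h4]
        field_simp

/-- Corollary 2, Rayleigh fading: Let `L : [0,∞) → (0,∞)` be measurable, and
suppose there exist `r₀ ≥ 0` and `ζ > 0` such that `L` is differentiable and nonincreasing
on `[r₀,∞)`, `L(x) → 0` as `x → ∞`, and `x·L(x) ≥ ζ·(−L′(x))` for all `x ≥ r₀`. Suppose
moreover there is `λ_c ≥ 0` with `∫_{r₀}^∞ (r/L(r)²)·e^{−πλr²} dr < ∞` for all `λ > λ_c`.
Then for every `λ > max(λ_c, 1/(πζ))`, the double integral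
`∫_0^∞ ∫_0^∞ 2πλ·r·t·exp(−πλr² − 2πλ·t·∫_{r}^∞ x·L(x)/(1+t·L(x)) dx) dr dt` is finite. -/
theorem second_negative_moment_finite
    (r₀ ζ lam lam_c : ℝ) (hr₀ : 0 ≤ r₀) (hζ : 0 < ζ) (L L' : ℝ → ℝ)
    (hLmeas : Measurable L)
    (hLpos : ∀ x, 0 ≤ x → 0 < L x)
    (hLderiv : ∀ x, r₀ ≤ x → HasDerivAt L (L' x) x)
    (hLmono : ∀ x y, r₀ ≤ x → x ≤ y → L y ≤ L x)
    (hLlim : Filter.Tendsto L Filter.atTop (nhds 0))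
    (hreg : ∀ x, r₀ ≤ x → ζ * (-(L' x)) ≤ x * L x)
    (hlam_c : 0 ≤ lam_c)
    (hfin : ∀ l : ℝ, lam_c < l →
      (∫⁻ r in Set.Ioi r₀,
        ENNReal.ofReal (r / L r ^ 2 * Real.exp (-(Real.pi * l * r ^ 2)))) < ⊤)
    (hlam : max lam_c (1 / (Real.pi * ζ)) < lam) :
    (∫⁻ t in Set.Ioi (0 : ℝ), ∫⁻ r in Set.Ioi (0 : ℝ),
        ENNReal.ofReal (2 * Real.pi * lam * r * t) *
          expNeg (ENNReal.ofReal (Real.pi * lam * r ^ 2) +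
            ENNReal.ofReal (2 * Real.pi * lam * t) *
              ∫⁻ x in Set.Ioi r, ENNReal.ofReal (x * L x / (1 + t * L x)))) < ⊤ := by
  have hπ : 0 < Real.pi := Real.pi_pos
  have hπζ : 0 < Real.pi * ζ := by positivity
  have hlam2 : 1 / (Real.pi * ζ) < lam := lt_of_le_of_lt (le_max_right _ _) hlam
  have hlamc : lam_c < lam := lt_of_le_of_lt (le_max_left _ _) hlam
  have hlam0 : 0 < lam := lt_trans (by positivity) hlam2
  set β := 2 * Real.pi * lam * ζ with hβdef
  have hβ : 2 < β := by
    have h1 : 1 < lam * (Real.pi * ζ) := (div_lt_iff₀ hπζ).1 hlam2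
    rw [hβdef]; nlinarith
  set C := 1 + 1 / (β - 2) with hCdef
  have hC : 0 < C := by
    have : 0 < β - 2 := by linarith
    rw [hCdef]; positivity
  set B : ℝ → ℝ → ℝ≥0∞ := fun r t =>
    ENNReal.ofReal (2 * Real.pi * lam * r * Real.exp (-(Real.pi * lam * r ^ 2))) *
      (ENNReal.ofReal t * ENNReal.ofReal ((1 + t * L (max r r₀)) ^ (-β))) with hBdef
  have hBmeas : Measurable fun p : ℝ × ℝ => B p.2 p.1 := by
    apply Measurable.fun_mul
    · exact (((measurable_snd.const_mul _).mul
        ((((measurable_snd.pow_const 2).const_mul (Real.pi * lam)).neg).exp))).ennreal_ofReal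
    · exact (measurable_fst.ennreal_ofReal).mul
        (((measurable_const.add (measurable_fst.mul
          (hLmeas.comp (measurable_snd.max measurable_const)))).pow
            measurable_const).ennreal_ofReal)
  have bound1 : ∀ t ∈ Set.Ioi (0:ℝ), ∀ r ∈ Set.Ioi (0:ℝ),
      ENNReal.ofReal (2 * Real.pi * lam * r * t) *
        expNeg (ENNReal.ofReal (Real.pi * lam * r ^ 2) +
          ENNReal.ofReal (2 * Real.pi * lam * t) *
            ∫⁻ x in Set.Ioi r, ENNReal.ofReal (x * L x / (1 + t * L x))) ≤ B r t := by
    intro t ht r hr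
    simp only [Set.mem_Ioi] at ht hr
    set J := ∫⁻ x in Set.Ioi r, ENNReal.ofReal (x * L x / (1 + t * L x)) with hJdef
    set m := max r r₀ with hmdef
    have hm : r₀ ≤ m := le_max_right _ _
    have hm0 : 0 ≤ m := le_trans hr₀ hm
    have hLm : 0 < L m := hLpos m hm0
    have hbase : (0:ℝ) < 1 + t * L m := by nlinarith
    have hlog0 : 0 ≤ Real.log (1 + t * L m) := Real.log_nonneg (by nlinarith)
    have hJle : ENNReal.ofReal (ζ / t * Real.log (1 + t * L m)) ≤ J :=
      le_trans (aux_J r₀ ζ hr₀ hζ L L' hLpos hLderiv hLmono hLlim hreg hLmeas ht hm)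
        (lintegral_mono_set (Set.Ioi_subset_Ioi (le_max_left r r₀)))
    have h2 : ENNReal.ofReal (β * Real.log (1 + t * L m)) ≤
        ENNReal.ofReal (2 * Real.pi * lam * t) * J := by
      calc ENNReal.ofReal (β * Real.log (1 + t * L m))
          = ENNReal.ofReal ((2 * Real.pi * lam * t) * (ζ / t * Real.log (1 + t * L m))) := by
            congr 1
            rw [hβdef]
            field_simp
        _ = ENNReal.ofReal (2 * Real.pi * lam * t) *
            ENNReal.ofReal (ζ / t * Real.log (1 + t * L m)) :=
            ENNReal.ofReal_mul (by positivity)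
        _ ≤ _ := mul_le_mul_right hJle _
    have h3 : expNeg (ENNReal.ofReal (Real.pi * lam * r ^ 2) +
          ENNReal.ofReal (2 * Real.pi * lam * t) * J) ≤
        ENNReal.ofReal (Real.exp (-(Real.pi * lam * r ^ 2))) *
          ENNReal.ofReal ((1 + t * L m) ^ (-β)) := by
      rw [expNeg_add]
      apply mul_le_mul'
      · rw [expNeg_ofReal (by positivity)]
      · calc expNeg (ENNReal.ofReal (2 * Real.pi * lam * t) * J)
            ≤ expNeg (ENNReal.ofReal (β * Real.log (1 + t * L m))) := expNeg_anti h2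
          _ = ENNReal.ofReal (Real.exp (-(β * Real.log (1 + t * L m)))) :=
              expNeg_ofReal (mul_nonneg (by linarith) hlog0)
          _ = ENNReal.ofReal ((1 + t * L m) ^ (-β)) := by
              rw [Real.rpow_def_of_pos hbase]
              congr 1
              ring
    calc ENNReal.ofReal (2 * Real.pi * lam * r * t) *
        expNeg (ENNReal.ofReal (Real.pi * lam * r ^ 2) +
          ENNReal.ofReal (2 * Real.pi * lam * t) * J)
        ≤ ENNReal.ofReal (2 * Real.pi * lam * r * t) *
          (ENNReal.ofReal (Real.exp (-(Real.pi * lam * r ^ 2))) *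
            ENNReal.ofReal ((1 + t * L m) ^ (-β))) := mul_le_mul_right h3 _
      _ = B r t := by
          rw [hBdef]
          simp only []
          rw [← mul_assoc, ← ENNReal.ofReal_mul (by positivity),
            show (2 * Real.pi * lam * r * t) * Real.exp (-(Real.pi * lam * r ^ 2)) =
              (2 * Real.pi * lam * r * Real.exp (-(Real.pi * lam * r ^ 2))) * t by ring,
            ENNReal.ofReal_mul (by positivity), mul_assoc]
  set G : ℝ → ℝ≥0∞ := fun r =>
    ENNReal.ofReal (2 * Real.pi * lam * r * Real.exp (-(Real.pi * lam * r ^ 2))) *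
      ENNReal.ofReal (C / (L (max r r₀)) ^ 2) with hGdef
  have hGmeas : Measurable G := by
    apply Measurable.fun_mul
    · exact (((measurable_id'.const_mul _).mul
        ((((measurable_id'.pow_const 2).const_mul (Real.pi * lam)).neg).exp))).ennreal_ofReal
    · exact (measurable_const.div
        ((hLmeas.comp (measurable_id'.max measurable_const)).pow_const 2)).ennreal_ofReal
  have step2 : ∀ r ∈ Set.Ioi (0:ℝ), ∫⁻ t in Set.Ioi (0:ℝ), B r t ≤ G r := by
    intro r hr
    simp only [Set.mem_Ioi] at hr
    have hLm : 0 < L (max r r₀) := hLpos _ (le_trans hr₀ (le_max_right _ _))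
    calc ∫⁻ t in Set.Ioi (0:ℝ), B r t
        = ENNReal.ofReal (2 * Real.pi * lam * r * Real.exp (-(Real.pi * lam * r ^ 2))) *
          ∫⁻ t in Set.Ioi (0:ℝ),
            ENNReal.ofReal t * ENNReal.ofReal ((1 + t * L (max r r₀)) ^ (-β)) := by
          rw [hBdef]
          exact lintegral_const_mul _
            ((measurable_id'.ennreal_ofReal).mul
              (((measurable_const.add (measurable_id'.mul measurable_const)).pow
                measurable_const).ennreal_ofReal))
      _ ≤ _ := by
          rw [hGdef]
          exact mul_le_mul_right (aux_T hLm hβ) _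
  -- now chain everything
  calc (∫⁻ t in Set.Ioi (0 : ℝ), ∫⁻ r in Set.Ioi (0 : ℝ),
        ENNReal.ofReal (2 * Real.pi * lam * r * t) *
          expNeg (ENNReal.ofReal (Real.pi * lam * r ^ 2) +
            ENNReal.ofReal (2 * Real.pi * lam * t) *
              ∫⁻ x in Set.Ioi r, ENNReal.ofReal (x * L x / (1 + t * L x))))
      ≤ ∫⁻ t in Set.Ioi (0:ℝ), ∫⁻ r in Set.Ioi (0:ℝ), B r t := by
        have hBmeas' : Measurable (Function.uncurry fun (t r : ℝ) => B r t) := hBmeas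
        apply setLIntegral_mono (hBmeas'.lintegral_prod_right)
        intro t ht
        exact setLIntegral_mono (hBmeas.comp measurable_prodMk_left) (bound1 t ht)
    _ = ∫⁻ r in Set.Ioi (0:ℝ), ∫⁻ t in Set.Ioi (0:ℝ), B r t :=
        lintegral_lintegral_swap (f := fun t r => B r t)
          (Measurable.aemeasurable hBmeas)
    _ ≤ ∫⁻ r in Set.Ioi (0:ℝ), G r := setLIntegral_mono hGmeas step2
    _ < ⊤ := by
        rw [← Set.Ioc_union_Ioi_eq_Ioi hr₀,
          lintegral_union measurableSet_Ioi (Set.Ioc_disjoint_Ioi le_rfl)]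
        apply ENNReal.add_lt_top.2
        constructor
        · -- over Ioc 0 r₀
          have hL0 : 0 < L r₀ := hLpos r₀ hr₀
          calc ∫⁻ r in Set.Ioc (0:ℝ) r₀, G r
              ≤ ∫⁻ _ in Set.Ioc (0:ℝ) r₀,
                ENNReal.ofReal (2 * Real.pi * lam * r₀ * (C / (L r₀) ^ 2)) := by
                apply setLIntegral_mono measurable_const
                intro r hrr
                have hr1 : 0 < r := hrr.1
                have hr2 : r ≤ r₀ := hrr.2
                have hnn : (0:ℝ) ≤ 2 * Real.pi * lam * r :=
                  mul_nonneg (mul_nonneg (by positivity) hlam0.le) hr1.le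
                rw [hGdef]
                simp only []
                rw [max_eq_right hrr.2,
                  ← ENNReal.ofReal_mul (mul_nonneg hnn (Real.exp_nonneg _))]
                apply ENNReal.ofReal_le_ofReal
                have he1 : Real.exp (-(Real.pi * lam * r ^ 2)) ≤ 1 := by
                  calc Real.exp (-(Real.pi * lam * r ^ 2)) ≤ Real.exp 0 :=
                        Real.exp_le_exp.2 (by nlinarith [hrr.1])
                    _ = 1 := Real.exp_zero
                have he0 : 0 ≤ Real.exp (-(Real.pi * lam * r ^ 2)) := Real.exp_nonneg _
                have hX : 0 ≤ C / (L r₀) ^ 2 := by positivity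
                have h1 := mul_le_mul_of_nonneg_left he1 hnn
                have h2 := mul_le_mul_of_nonneg_left hr2
                  (by positivity : (0:ℝ) ≤ 2 * Real.pi * lam)
                nlinarith [mul_le_mul_of_nonneg_right h1 hX,
                  mul_le_mul_of_nonneg_right h2 hX]
            _ = ENNReal.ofReal (2 * Real.pi * lam * r₀ * (C / (L r₀) ^ 2)) *
                volume (Set.Ioc (0:ℝ) r₀) := setLIntegral_const _ _
            _ < ⊤ := ENNReal.mul_lt_top ENNReal.ofReal_lt_top
                (by rw [Real.volume_Ioc]; exact ENNReal.ofReal_lt_top)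
        · -- over Ioi r₀
          have heq : ∫⁻ r in Set.Ioi r₀, G r =
              ENNReal.ofReal (2 * Real.pi * lam * C) *
                ∫⁻ r in Set.Ioi r₀,
                  ENNReal.ofReal (r / L r ^ 2 * Real.exp (-(Real.pi * lam * r ^ 2))) := by
            rw [← lintegral_const_mul _ (f := fun r =>
                ENNReal.ofReal (r / L r ^ 2 * Real.exp (-(Real.pi * lam * r ^ 2))))
              (((measurable_id'.div (hLmeas.pow_const 2)).mul
                ((((measurable_id'.pow_const 2).const_mul (Real.pi * lam)).neg).exp)).ennreal_ofReal)]
            apply setLIntegral_congr_fun measurableSet_Ioi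
            intro r hrr
            have hrr' : r₀ < r := hrr
            have hr0 : 0 ≤ r := le_trans hr₀ hrr'.le
            have hLr : 0 < L r := hLpos r hr0
            rw [hGdef]
            simp only []
            rw [max_eq_left hrr'.le, ← ENNReal.ofReal_mul (by positivity),
              ← ENNReal.ofReal_mul (by positivity)]
            congr 1
            field_simp
          rw [heq]
          exact ENNReal.mul_lt_top ENNReal.ofReal_lt_top (hfin lam hlamc)
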